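/- Let F be a field and let k ≥ 1, d ≥ 0 be integers satisfying 2 · (C(k, ≤d) + 1) · C(k, ≤⌊k/4⌋) ≤ 2^k, where C(k, ≤b) = Σ_{j=0}^{b} C(k, j). Then there exists a non-empty set T ⊆ {0,1}^k such that: (1) |T| ≤ C(k, ≤d) + 1; (2) for all distinct y', y'' ∈ T, min(Δ(y', y''), k − Δ(y', y'')) ≥ k/4, where Δ denotes Hamming distance; and (3) for all P, P' ∈ F(k, d), the number of points y ∈ T with P(y) ≠ P'(y) is not equal to 1. -/

import Mathlib

/-- `IsPolyDeg d f` means `f : {0,1}^ι → F` is computed by a multilinear polynomial of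
total degree at most `d`. -/
def IsPolyDeg {ι : Type*} [Fintype ι] [DecidableEq ι] {F : Type*} [Field F]
    (d : ℕ) (f : (ι → Bool) → F) : Prop :=
  ∃ α : Finset ι → F, (∀ S : Finset ι, d < S.card → α S = 0) ∧
    ∀ x : ι → Bool, f x = ∑ S : Finset ι, α S * ∏ i ∈ S, (if x i then (1 : F) else 0)

/-- `C(k, ≤ b) = Σ_{j=0}^b C(k, j)`. -/
def binomLE (k b : ℕ) : ℕ := ∑ j ∈ Finset.range (b + 1), k.choose j


section Stmt8Aux

open Finset

variable {k : ℕ}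

/-- number of subsets of `Fin k` of size ≤ m -/
lemma card_small_sets (m : ℕ) :
    (univ.filter fun A : Finset (Fin k) => A.card ≤ m).card = binomLE k m := by
  classical
  have : (univ.filter fun A : Finset (Fin k) => A.card ≤ m)
      = (Finset.range (m+1)).biUnion (fun j => Finset.powersetCard j univ) := by
    ext A
    simp only [mem_filter, mem_univ, true_and, mem_biUnion, mem_range,
      Finset.mem_powersetCard]
    constructor
    · intro h; exact ⟨A.card, Nat.lt_succ_of_le h, subset_univ A, rfl⟩
    · rintro ⟨j, hj, -, rfl⟩; omega
  rw [this, card_biUnion]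
  · simp [binomLE, Finset.card_powersetCard]
  · intro i _ j _ hij
    simp only [Finset.disjoint_left, Finset.mem_powersetCard]
    rintro A ⟨-, rfl⟩ ⟨-, h⟩; exact hij h

def δ (y y' : Fin k → Bool) : ℕ := (univ.filter (fun i => y i ≠ y' i)).card

lemma delta_comm (y y' : Fin k → Bool) : δ y y' = δ y' y := by
  unfold δ; congr 1; apply filter_congr; intro i _; simp [ne_comm]

lemma delta_self (y : Fin k → Bool) : δ y y = 0 := by simp [δ]

lemma delta_add_compl (x y : Fin k → Bool) : δ x y + δ x (fun i => !(y i)) = k := by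
  classical
  unfold δ
  have : (univ.filter fun i => x i ≠ (fun i => !(y i)) i)
      = univ.filter (fun i => ¬ (x i ≠ y i)) := by
    apply filter_congr; intro i _
    cases hx : x i <;> cases hy : y i <;> simp [hx, hy]
  rw [this, Finset.card_filter_add_card_filter_not]
  simp

lemma ball_card_le (y : Fin k → Bool) (m : ℕ) :
    (univ.filter fun x : Fin k → Bool => δ x y ≤ m).card ≤ binomLE k m := by
  classical
  rw [← card_small_sets m]
  apply Finset.card_le_card_of_injOn (fun x => univ.filter (fun i => x i ≠ y i))
  · intro x hx
    simp only [mem_coe, mem_filter, mem_univ, true_and] at hx ⊢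
    exact hx
  · intro x hx x' hx' h
    funext i
    have := Finset.ext_iff.mp h i
    simp only [mem_filter, mem_univ, true_and] at this
    cases hx : x i <;> cases hy : x' i <;> simp [hx, hy] at this ⊢


def good {k : ℕ} (x y : Fin k → Bool) : Prop :=
  (k : ℚ) / 4 ≤ ((min (δ x y) (k - δ x y) : ℕ) : ℚ)

lemma good_comm {k : ℕ} (x y : Fin k → Bool) : good x y ↔ good y x := by
  unfold good; rw [delta_comm]

lemma good_of_far {k : ℕ} {x y : Fin k → Bool}
    (h1 : ¬ δ x y ≤ k / 4) (h2 : ¬ δ x (fun i => !(y i)) ≤ k / 4) : good x y := by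
  have hc := delta_add_compl x y
  have hmin4 : k < 4 * (min (δ x y) (k - δ x y)) := by
    have h5 : k / 4 + 1 ≤ min (δ x y) (k - δ x y) := le_min (by omega) (by omega)
    have h6 : k < 4 * (k / 4 + 1) := by omega
    exact h6.trans_le (Nat.mul_le_mul_left 4 h5)
  unfold good
  have : (k : ℚ) < 4 * ((min (δ x y) (k - δ x y) : ℕ) : ℚ) := by exact_mod_cast hmin4
  linarith

lemma greedy_step {k d : ℕ} (hk : 1 ≤ k)
    (hcond : 2 * (binomLE k d + 1) * binomLE k (k / 4) ≤ 2 ^ k)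
    (S : Finset (Fin k → Bool)) (hS : S.card ≤ binomLE k d) :
    ∃ x, x ∉ S ∧ ∀ y ∈ S, good x y := by
  classical
  set m := k / 4 with hm
  set Bad : Finset (Fin k → Bool) := S.biUnion (fun y =>
    (univ.filter fun x => δ x y ≤ m) ∪ (univ.filter fun x => δ x (fun i => !(y i)) ≤ m))
    with hBad
  have hBadcard : Bad.card ≤ S.card * (2 * binomLE k m) := by
    refine (Finset.card_biUnion_le).trans ?_
    have h := Finset.sum_le_card_nsmul S
      (fun y => ((univ.filter fun x => δ x y ≤ m) ∪
        (univ.filter fun x => δ x (fun i => !(y i)) ≤ m)).card)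
      (2 * binomLE k m) (fun y _ => ?_)
    · simpa using h
    · refine (Finset.card_union_le _ _).trans ?_
      have := ball_card_le y m
      have := ball_card_le (fun i => !(y i)) m
      omega
  have hBm : 1 ≤ binomLE k m := by
    have : k.choose 0 = 1 := Nat.choose_zero_right k
    have : k.choose 0 ≤ binomLE k m := by
      unfold binomLE
      exact Finset.single_le_sum (f := fun j => k.choose j) (fun _ _ => Nat.zero_le _)
        (Finset.mem_range.mpr (Nat.succ_pos m))
    omega
  have hlt : Bad.card < 2 ^ k := by
    have h1 : S.card * (2 * binomLE k m) ≤ binomLE k d * (2 * binomLE k m) :=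
      Nat.mul_le_mul_right _ hS
    have h2 : binomLE k d * (2 * binomLE k m) + 2 * binomLE k m
        = 2 * (binomLE k d + 1) * binomLE k m := by ring
    omega
  have hcardX : Fintype.card (Fin k → Bool) = 2 ^ k := by
    simp [Fintype.card_fun]
  obtain ⟨x, hx⟩ : ∃ x, x ∉ Bad := by
    by_contra h
    push_neg at h
    have : (univ : Finset (Fin k → Bool)) ⊆ Bad := fun x _ => h x
    have := Finset.card_le_card this
    rw [Finset.card_univ, hcardX] at this
    omega
  have hxgood : ∀ y ∈ S, good x y := by
    intro y hy
    have hxy : ¬ δ x y ≤ m ∧ ¬ δ x (fun i => !(y i)) ≤ m := by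
      by_contra hcon
      apply hx
      rw [hBad]
      refine Finset.mem_biUnion.mpr ⟨y, hy, ?_⟩
      rw [Finset.mem_union]
      simp only [Finset.mem_filter, Finset.mem_univ, true_and]
      tauto
    exact good_of_far hxy.1 hxy.2
  refine ⟨x, ?_, hxgood⟩
  intro hxS
  have := hxgood x hxS
  unfold good at this
  rw [delta_self] at this
  simp at this
  have : (1:ℚ) ≤ k := by exact_mod_cast hk
  linarith

lemma greedy {k d : ℕ} (hk : 1 ≤ k)
    (hcond : 2 * (binomLE k d + 1) * binomLE k (k / 4) ≤ 2 ^ k) :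
    ∀ n, n ≤ binomLE k d + 1 → ∃ S : Finset (Fin k → Bool), S.card = n ∧
      ∀ y ∈ S, ∀ y' ∈ S, y ≠ y' → good y y' := by
  intro n
  induction n with
  | zero => exact fun _ => ⟨∅, by simp⟩
  | succ n ih =>
    intro hn
    obtain ⟨S, hcard, hgood⟩ := ih (by omega)
    obtain ⟨x, hxS, hx⟩ := greedy_step hk hcond S (by omega)
    refine ⟨insert x S, by rw [Finset.card_insert_of_notMem hxS, hcard], ?_⟩
    intro y hy y' hy' hne
    rcases Finset.mem_insert.mp hy with h1 | h1
    · rcases Finset.mem_insert.mp hy' with h2 | h2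
      · exact absurd (h1.trans h2.symm) hne
      · exact h1 ▸ hx y' h2
    · rcases Finset.mem_insert.mp hy' with h2 | h2
      · exact h2 ▸ (good_comm _ _).mp (hx y h1)
      · exact hgood y h1 y' h2 hne


end Stmt8Aux

open scoped Classical in
/-- Existence of the query set `T`. If
`2·(C(k,≤d)+1)·C(k,≤⌊k/4⌋) ≤ 2^k`, then there is a nonempty `T ⊆ {0,1}^k` with
`|T| ≤ C(k,≤d)+1`, pairwise distances satisfying `min(Δ, k−Δ) ≥ k/4`, and such that no two
degree-`d` multilinear polynomials differ at exactly one point of `T`. -/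
theorem stmt8 (F : Type*) [Field F] (k d : ℕ) (hk : 1 ≤ k)
    (hcond : 2 * (binomLE k d + 1) * binomLE k (k / 4) ≤ 2 ^ k) :
    ∃ T : Finset (Fin k → Bool), T.Nonempty ∧ T.card ≤ binomLE k d + 1 ∧
      (∀ y' ∈ T, ∀ y'' ∈ T, y' ≠ y'' →
        (k : ℚ) / 4 ≤
          ((min ((Finset.univ.filter (fun i => y' i ≠ y'' i)).card)
              (k - (Finset.univ.filter (fun i => y' i ≠ y'' i)).card) : ℕ) : ℚ)) ∧
      (∀ P P' : (Fin k → Bool) → F, IsPolyDeg d P → IsPolyDeg d P' →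
        (T.filter (fun y => P y ≠ P' y)).card ≠ 1) := by
  obtain ⟨S, hScard, hSgood⟩ := greedy hk hcond (binomLE k d + 1) le_rfl
  -- the monomials restricted to S
  set mono : Finset (Fin k) → (Fin k → Bool) → F :=
    fun A x => ∏ i ∈ A, (if x i then (1 : F) else 0) with hmono
  set gens : Finset (↥S → F) :=
    (Finset.univ.filter fun A : Finset (Fin k) => A.card ≤ d).image
      (fun A => fun y : ↥S => mono A y) with hgens
  set V : Submodule F (↥S → F) := Submodule.span F (gens : Set (↥S → F)) with hV
  have hVlt : V < ⊤ := by
    apply span_lt_top_of_card_lt_finrank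
    rw [Finset.toFinset_coe]
    have h1 : gens.card ≤ binomLE k d := by
      refine (Finset.card_image_le).trans ?_
      rw [card_small_sets]
    have h2 : Module.finrank F (↥S → F) = binomLE k d + 1 := by
      rw [Module.finrank_pi, Fintype.card_coe, hScard]
    omega
  obtain ⟨f, hf0, hfbot⟩ := V.exists_dual_map_eq_bot_of_lt_top hVlt inferInstance
  have hfV : ∀ v ∈ V, f v = 0 := by
    intro v hv
    have : f v ∈ V.map f := Submodule.mem_map_of_mem hv
    rw [hfbot] at this
    exact (Submodule.mem_bot F).mp this
  have f_eq : ∀ g : ↥S → F, f g = ∑ y : ↥S, g y * f (Pi.single y 1) := by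
    intro g
    conv_lhs => rw [← Finset.univ_sum_single g]
    rw [map_sum]
    congr 1
    funext y
    have hs : Pi.single y (g y) = g y • (Pi.single y (1 : F) : ↥S → F) := by
      rw [← Pi.single_smul', smul_eq_mul, mul_one]
    rw [hs, map_smul, smul_eq_mul]
  set c : (Fin k → Bool) → F :=
    fun y => if h : y ∈ S then f (Pi.single (⟨y, h⟩ : ↥S) 1) else 0 with hc
  set T : Finset (Fin k → Bool) := S.filter (fun y => c y ≠ 0) with hT
  have hTsub : T ⊆ S := Finset.filter_subset _ _
  refine ⟨T, ?_, ?_, ?_, ?_⟩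
  · -- nonempty
    by_contra h
    rw [Finset.not_nonempty_iff_eq_empty] at h
    apply hf0
    have hall : ∀ y : ↥S, f (Pi.single y 1) = 0 := by
      intro y
      by_contra hy
      have hcy : c (y : Fin k → Bool) ≠ 0 := by
        rw [hc]; simpa [dif_pos y.2, Subtype.eta] using hy
      have : (y : Fin k → Bool) ∈ T := Finset.mem_filter.mpr ⟨y.2, hcy⟩
      rw [h] at this
      exact absurd this (Finset.notMem_empty _)
    refine LinearMap.ext fun g => ?_
    rw [f_eq]
    simp [hall]
  · exact le_trans (Finset.card_le_card hTsub) (le_of_eq hScard)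
  · intro y' hy' y'' hy'' hne
    exact hSgood y' (hTsub hy') y'' (hTsub hy'') hne
  · rintro P P' ⟨a, ha0, ha⟩ ⟨b, hb0, hb⟩ hcard1
    set Q : (Fin k → Bool) → F := fun x => P x - P' x with hQ
    have hQrep : ∀ x, Q x = ∑ A : Finset (Fin k), (a A - b A) * mono A x := by
      intro x
      rw [hQ]
      simp only [ha x, hb x, ← Finset.sum_sub_distrib, sub_mul, hmono]
    -- restriction of Q to S lies in V
    have hQmem : (fun y : ↥S => Q y) ∈ V := by
      have hrw : (fun y : ↥S => Q y)
          = ∑ A ∈ Finset.univ.filter (fun A : Finset (Fin k) => A.card ≤ d),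
              (a A - b A) • (fun y : ↥S => mono A y) := by
        funext y
        rw [hQrep]
        rw [Finset.sum_apply]
        simp only [Pi.smul_apply, smul_eq_mul]
        refine (Finset.sum_subset (Finset.filter_subset _ _) ?_).symm
        intro A _ hA
        simp only [Finset.mem_filter, Finset.mem_univ, true_and, not_le] at hA
        rw [ha0 A hA, hb0 A hA]
        ring_nf
      rw [hrw]
      apply Submodule.sum_mem
      intro A hA
      exact Submodule.smul_mem _ _ (Submodule.subset_span
        (Finset.mem_coe.mpr (Finset.mem_image_of_mem _ hA)))
    have hsum0 : ∑ y ∈ S, Q y * c y = 0 := by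
      have h1 : f (fun y : ↥S => Q y) = 0 := hfV _ hQmem
      rw [f_eq] at h1
      rw [← h1]
      rw [← Finset.sum_coe_sort S (fun y => Q y * c y)]
      congr 1
      funext y
      rw [hc]
      simp [dif_pos y.2, Subtype.eta]
    obtain ⟨y₀, hy₀⟩ := Finset.card_eq_one.mp hcard1
    have hW : T.filter (fun y => P y ≠ P' y) ⊆ S := le_trans (Finset.filter_subset _ _) hTsub
    have hsum1 : ∑ y ∈ S, Q y * c y = ∑ y ∈ T.filter (fun y => P y ≠ P' y), Q y * c y := by
      refine (Finset.sum_subset hW ?_).symm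
      intro y hyS hyW
      by_cases hcy : c y = 0
      · rw [hcy, mul_zero]
      · have hyT : y ∈ T := Finset.mem_filter.mpr ⟨hyS, hcy⟩
        have : ¬ P y ≠ P' y := by
          intro hPy
          exact hyW (Finset.mem_filter.mpr ⟨hyT, hPy⟩)
        rw [not_not] at this
        rw [hQ]
        simp [this]
    rw [hsum1, hy₀, Finset.sum_singleton] at hsum0
    have hy₀mem : y₀ ∈ T.filter (fun y => P y ≠ P' y) := by rw [hy₀]; exact Finset.mem_singleton_self _
    obtain ⟨hy₀T, hy₀ne⟩ := Finset.mem_filter.mp hy₀mem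
    have hcy₀ : c y₀ ≠ 0 := (Finset.mem_filter.mp hy₀T).2
    have hQy₀ : Q y₀ ≠ 0 := sub_ne_zero.mpr hy₀ne
    exact (mul_ne_zero hQy₀ hcy₀) hsum0
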